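/- Let i be a type-2 position of a string T. If w·g·u·uᴿ·wᴿ is a canonical longest SAGP for pivot i, then |w| = 1. -/

import Mathlib

/-- 1-based substring T[b..e]. -/
def sub (T : List Char) (b e : ℕ) : List Char := (T.drop (b-1)).take (e+1-b)

/-- The string x occurs in T beginning at 1-based position p. -/
def occursAt (T x : List Char) (p : ℕ) : Prop := x <+: T.drop (p-1)

/-- T has an even palindrome of radius r centered at position i (i.e. T[i-r+1..i+r] is a palindrome). -/
def evenPalAt (T : List Char) (i r : ℕ) : Prop :=
  r ≤ i ∧ i + r ≤ T.length ∧ (sub T (i-r+1) (i+r)).reverse = sub T (i-r+1) (i+r)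

/-- The SAGP w·g·u·uᴿ·wᴿ (w, g, u nonempty) occurs in T with pivot i. -/
def SAGPat (T : List Char) (i : ℕ) (w g u : List Char) : Prop :=
  w ≠ [] ∧ g ≠ [] ∧ u ≠ [] ∧ ∃ b, 1 ≤ b ∧ b + (w.length + g.length + u.length) = i + 1 ∧
    occursAt T (w ++ g ++ u ++ u.reverse ++ w.reverse) b

/-- w·g·u·uᴿ·wᴿ is a longest SAGP for pivot i (maximal arm length |wu|). -/
def longestSAGP (T : List Char) (i : ℕ) (w g u : List Char) : Prop :=
  SAGPat T i w g u ∧ ∀ w' g' u', SAGPat T i w' g' u' → w'.length + u'.length ≤ w.length + u.length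

/-- w·g·u·uᴿ·wᴿ is a canonical longest SAGP for pivot i (moreover |u| maximal among longest). -/
def canonSAGP (T : List Char) (i : ℕ) (w g u : List Char) : Prop :=
  longestSAGP T i w g u ∧ ∀ w' g' u', longestSAGP T i w' g' u' → u'.length ≤ u.length

/-- Position i is of type-1: some SAGP for pivot i has u·uᴿ equal to the maximal even palindrome centered at i. -/
def type1 (T : List Char) (i : ℕ) : Prop :=
  ∃ w g u, SAGPat T i w g u ∧ ∀ r, evenPalAt T i r → r ≤ u.length

/-- at a type-2 position, any canonical longest SAGP has |w| = 1. -/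
theorem type2_canonical_w_length_one (T : List Char) (i : ℕ) (h2 : ¬ type1 T i)
    (w g u : List Char) (h : canonSAGP T i w g u) : w.length = 1 := by
  obtain ⟨⟨hS, hmax⟩, hcanon⟩ := h
  have hS' := hS
  obtain ⟨hw, hg, hu, b, hb1, hbl, hocc⟩ := hS'
  by_contra hne
  have hw1 : 1 ≤ w.length := List.length_pos_iff.mpr hw
  have hg1 : 1 ≤ g.length := List.length_pos_iff.mpr hg
  have hu1 : 1 ≤ u.length := List.length_pos_iff.mpr hu
  have hw2 : 2 ≤ w.length := by omega
  -- type-2 gives a strictly larger even palindrome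
  rw [type1] at h2
  push_neg at h2
  obtain ⟨r, hpal, hru⟩ := h2 w g u hS
  obtain ⟨hri, hrT, hrev⟩ := hpal
  set S := sub T (i-r+1) (i+r) with hSdef
  have hSlen : S.length = 2*r := by
    simp only [hSdef, sub, List.length_take, List.length_drop]
    omega
  have hSk : ∀ k, k < 2*r → S[k]? = T[i-r+k]? := by
    intro k hk
    simp only [hSdef, sub]
    rw [List.getElem?_take, if_pos (by omega), List.getElem?_drop]
    have e : i - r + 1 - 1 + k = i - r + k := by omega
    rw [e]
  -- the key character equality at distance |u|+1 from the pivot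
  have hchar : T[i-(u.length+1)]? = T[i+u.length]? := by
    have h1 : S[r-u.length-1]? = S[2*r-1-(r-u.length-1)]? := by
      conv_lhs => rw [← hrev]
      rw [List.getElem?_reverse (by rw [hSlen]; omega)]
      rw [hSlen]
    rw [hSk _ (by omega), hSk _ (by omega)] at h1
    have e1 : i-r+(r-u.length-1) = i-(u.length+1) := by omega
    have e2 : i-r+(2*r-1-(r-u.length-1)) = i+u.length := by omega
    rw [e1, e2] at h1
    exact h1
  -- express both characters via the occurrence
  obtain ⟨t, ht⟩ := hocc
  have hTdrop : T.drop (b-1) = w ++ (g ++ (u ++ (u.reverse ++ (w.reverse ++ t)))) := by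
    rw [← ht]; simp [List.append_assoc]
  have hTk : ∀ k, T[b-1+k]? = (w ++ (g ++ (u ++ (u.reverse ++ (w.reverse ++ t)))))[k]? := by
    intro k
    rw [← hTdrop, List.getElem?_drop]
  set c := g.getLast hg with hcdef
  set d := w.getLast hw with hddef
  have hgl : T[i-(u.length+1)]? = some c := by
    have e : i-(u.length+1) = b-1+(w.length+g.length-1) := by omega
    rw [e, hTk]
    rw [List.getElem?_append, if_neg (by omega), List.getElem?_append, if_pos (by omega)]
    have e2 : w.length + g.length - 1 - w.length = g.length - 1 := by omega
    rw [e2, List.getElem?_eq_getElem (by omega)]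
    congr 1
    exact (List.getLast_eq_getElem hg).symm
  have hwl : T[i+u.length]? = some d := by
    have e : i+u.length = b-1+(w.length+g.length+2*u.length) := by omega
    rw [e, hTk]
    rw [List.getElem?_append, if_neg (by omega)]
    rw [List.getElem?_append, if_neg (by omega)]
    rw [List.getElem?_append, if_neg (by omega)]
    rw [List.getElem?_append, if_neg (by simp only [List.length_reverse]; omega)]
    rw [List.getElem?_append, if_pos (by simp only [List.length_reverse]; omega)]
    have e2 : w.length + g.length + 2*u.length - w.length - g.length - u.length
        - u.reverse.length = 0 := by rw [List.length_reverse]; omega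
    rw [e2, List.getElem?_reverse (by omega)]
    rw [List.getElem?_eq_getElem (by omega)]
    exact congrArg some (List.getLast_eq_getElem hw).symm
  have hcd : c = d := by
    have := hchar
    rw [hgl, hwl] at this
    exact Option.some.inj this
  -- decompositions
  have hwdec : w.dropLast ++ [c] = w := by
    rw [hcd, hddef]; exact List.dropLast_append_getLast hw
  have hgdec : g.dropLast ++ [c] = g := by
    exact List.dropLast_append_getLast hg
  have hwdl : w.dropLast.length = w.length - 1 := List.length_dropLast
  have hgdl : g.dropLast.length = g.length - 1 := List.length_dropLast
  -- the new SAGP: w' = w.dropLast, g' = c :: g.dropLast, u' = c :: u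
  have hstreq : w.dropLast ++ (c :: g.dropLast) ++ (c :: u) ++ (c :: u).reverse
      ++ w.dropLast.reverse = w ++ g ++ u ++ u.reverse ++ w.reverse := by
    conv_rhs => rw [← hwdec, ← hgdec]
    simp [List.append_assoc, List.reverse_append]
  have hS2 : SAGPat T i w.dropLast (c :: g.dropLast) (c :: u) := by
    refine ⟨?_, List.cons_ne_nil _ _, List.cons_ne_nil _ _, b, hb1, ?_, ?_⟩
    · rw [← List.length_pos_iff]; omega
    · simp only [List.length_cons, hwdl, hgdl]; omega
    · rw [occursAt, hstreq]
      exact ⟨t, ht⟩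
  have hL2 : longestSAGP T i w.dropLast (c :: g.dropLast) (c :: u) := by
    refine ⟨hS2, fun w' g' u' hs => ?_⟩
    have := hmax w' g' u' hs
    simp only [List.length_cons, hwdl]
    omega
  have := hcanon _ _ _ hL2
  simp only [List.length_cons] at this
  omega
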